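/- Let F_1, ..., F_k be pairwise complementary factors of M_d ⊗ M_n, each isomorphic to M_n, and suppose there is a rank-one projection |h⟩⟨h| in the linear span of F_1 ∪ ... ∪ F_k. Then k ≥ d + (d-1)/(n-1). -/

import Mathlib

open Matrix Kronecker

noncomputable def factorEmbed (d n : ℕ) (U : Matrix (Fin d × Fin n) (Fin d × Fin n) ℂ) :
    Matrix (Fin n) (Fin n) ℂ →ₗ[ℂ] Matrix (Fin d × Fin n) (Fin d × Fin n) ℂ where
  toFun B := U * ((1 : Matrix (Fin d) (Fin d) ℂ) ⊗ₖ B) * Uᴴ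
  map_add' B C := by simp [Matrix.kronecker_add, Matrix.mul_add, Matrix.add_mul]
  map_smul' c B := by simp [Matrix.kronecker_smul, Matrix.mul_smul, Matrix.smul_mul]

namespace Stmt9

variable {d n : ℕ}

lemma factorEmbed_apply (U : Matrix (Fin d × Fin n) (Fin d × Fin n) ℂ)
    (B : Matrix (Fin n) (Fin n) ℂ) :
    factorEmbed d n U B = U * ((1 : Matrix (Fin d) (Fin d) ℂ) ⊗ₖ B) * Uᴴ := rfl

/-- partial trace over the `Fin d` factor -/
noncomputable def ptr (d n : ℕ) (Z : Matrix (Fin d × Fin n) (Fin d × Fin n) ℂ) :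
    Matrix (Fin n) (Fin n) ℂ :=
  Matrix.of fun a b => ∑ x : Fin d, Z (x, a) (x, b)

lemma ptr_apply (Z : Matrix (Fin d × Fin n) (Fin d × Fin n) ℂ) (a b : Fin n) :
    ptr d n Z a b = ∑ x : Fin d, Z (x, a) (x, b) := rfl

lemma ptr_add (Z W : Matrix (Fin d × Fin n) (Fin d × Fin n) ℂ) :
    ptr d n (Z + W) = ptr d n Z + ptr d n W := by
  ext a b; simp [ptr, Finset.sum_add_distrib]

lemma ptr_smul (c : ℂ) (Z : Matrix (Fin d × Fin n) (Fin d × Fin n) ℂ) :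
    ptr d n (c • Z) = c • ptr d n Z := by
  ext a b; simp [ptr, Finset.mul_sum]

lemma ptr_kron (B : Matrix (Fin n) (Fin n) ℂ) :
    ptr d n ((1 : Matrix (Fin d) (Fin d) ℂ) ⊗ₖ B) = (d : ℂ) • B := by
  ext a b
  simp [ptr, Matrix.kroneckerMap_apply, Matrix.one_apply, Finset.sum_const, mul_comm]

lemma trace_ptr (Z : Matrix (Fin d × Fin n) (Fin d × Fin n) ℂ) :
    (ptr d n Z).trace = Z.trace := by
  rw [Matrix.trace, Matrix.trace]
  simp only [Matrix.diag, ptr_apply, Fintype.sum_prod_type]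
  exact Finset.sum_comm

/-- conditional expectation onto the factor of `U` -/
noncomputable def phi (d n : ℕ) (U : Matrix (Fin d × Fin n) (Fin d × Fin n) ℂ) :
    Matrix (Fin d × Fin n) (Fin d × Fin n) ℂ →ₗ[ℂ] Matrix (Fin d × Fin n) (Fin d × Fin n) ℂ where
  toFun X := factorEmbed d n U ((d : ℂ)⁻¹ • ptr d n (Uᴴ * X * U))
  map_add' X Y := by
    rw [Matrix.mul_add, Matrix.add_mul, ptr_add, smul_add, map_add]
  map_smul' c X := by
    rw [RingHom.id_apply, Matrix.mul_smul, Matrix.smul_mul, ptr_smul, smul_comm]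
    exact (factorEmbed d n U).map_smul c _

lemma phi_apply (U X : Matrix (Fin d × Fin n) (Fin d × Fin n) ℂ) :
    phi d n U X = factorEmbed d n U ((d : ℂ)⁻¹ • ptr d n (Uᴴ * X * U)) := rfl

lemma phi_mem (U X : Matrix (Fin d × Fin n) (Fin d × Fin n) ℂ) :
    phi d n U X ∈ LinearMap.range (factorEmbed d n U) := ⟨_, rfl⟩

lemma phi_factorEmbed (hd : d ≠ 0) (U : Matrix (Fin d × Fin n) (Fin d × Fin n) ℂ)
    (hU : U ∈ Matrix.unitaryGroup (Fin d × Fin n) ℂ) (B : Matrix (Fin n) (Fin n) ℂ) :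
    phi d n U (factorEmbed d n U B) = factorEmbed d n U B := by
  have h1 : Uᴴ * U = 1 := by
    simpa [Matrix.star_eq_conjTranspose] using Matrix.mem_unitaryGroup_iff'.mp hU
  have h2 : Uᴴ * (U * ((1 : Matrix (Fin d) (Fin d) ℂ) ⊗ₖ B) * Uᴴ) * U
      = (1 : Matrix (Fin d) (Fin d) ℂ) ⊗ₖ B := by
    calc Uᴴ * (U * ((1 : Matrix (Fin d) (Fin d) ℂ) ⊗ₖ B) * Uᴴ) * U
        = (Uᴴ * U) * ((1 : Matrix (Fin d) (Fin d) ℂ) ⊗ₖ B) * (Uᴴ * U) := by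
          noncomm_ring
      _ = _ := by rw [h1]; simp
  simp only [phi_apply, factorEmbed_apply]
  rw [h2, ptr_kron, smul_smul, inv_mul_cancel₀ (by exact_mod_cast hd), one_smul]

lemma factorEmbed_one (U : Matrix (Fin d × Fin n) (Fin d × Fin n) ℂ)
    (hU : U ∈ Matrix.unitaryGroup (Fin d × Fin n) ℂ) :
    factorEmbed d n U 1 = 1 := by
  have h1 : U * Uᴴ = 1 := by
    simpa [Matrix.star_eq_conjTranspose] using Matrix.mem_unitaryGroup_iff.mp hU
  rw [factorEmbed_apply, Matrix.one_kronecker_one, Matrix.mul_one, h1]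

lemma phi_one (hd : d ≠ 0) (U : Matrix (Fin d × Fin n) (Fin d × Fin n) ℂ)
    (hU : U ∈ Matrix.unitaryGroup (Fin d × Fin n) ℂ) :
    phi d n U 1 = 1 := by
  conv_lhs => rw [← factorEmbed_one U hU]
  rw [phi_factorEmbed hd U hU, factorEmbed_one U hU]

lemma trace_phi (hd : d ≠ 0) (U : Matrix (Fin d × Fin n) (Fin d × Fin n) ℂ)
    (hU : U ∈ Matrix.unitaryGroup (Fin d × Fin n) ℂ)
    (X : Matrix (Fin d × Fin n) (Fin d × Fin n) ℂ) :
    (phi d n U X).trace = X.trace := by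
  have h1 : U * Uᴴ = 1 := by
    simpa [Matrix.star_eq_conjTranspose] using Matrix.mem_unitaryGroup_iff.mp hU
  have h1' : Uᴴ * U = 1 := by
    simpa [Matrix.star_eq_conjTranspose] using Matrix.mem_unitaryGroup_iff'.mp hU
  have key : ∀ M : Matrix (Fin d × Fin n) (Fin d × Fin n) ℂ, (U * M * Uᴴ).trace = M.trace := by
    intro M
    rw [Matrix.trace_mul_cycle, h1', Matrix.one_mul]
  have key2 : (Uᴴ * X * U).trace = X.trace := by
    rw [Matrix.trace_mul_cycle, h1, Matrix.one_mul]
  rw [phi_apply, factorEmbed_apply, key, Matrix.trace_kronecker, Matrix.trace_one,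
    Matrix.trace_smul, trace_ptr, key2, Fintype.card_fin, smul_eq_mul, ← mul_assoc,
    mul_inv_cancel₀ (by exact_mod_cast hd), one_mul]


lemma kron_one_conjT (A : Matrix (Fin d) (Fin d) ℂ) (W : Matrix (Fin n) (Fin n) ℂ) :
    (A ⊗ₖ W)ᴴ = Aᴴ ⊗ₖ Wᴴ := by
  ext p q
  simp [Matrix.conjTranspose_apply, Matrix.kroneckerMap_apply]

lemma zero_of_traceSq {m : Type*} [Fintype m] (Y : Matrix m m ℂ) (hY : (Yᴴ * Y).trace = 0) :
    Y = 0 := by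
  have h1 : (Yᴴ * Y).trace = ↑(∑ q : m, ∑ p : m, Complex.normSq (Y p q)) := by
    push_cast
    simp [Matrix.trace, Matrix.diag, Matrix.mul_apply, Matrix.conjTranspose_apply,
      Complex.normSq_eq_conj_mul_self]
  rw [h1] at hY
  norm_cast at hY
  ext p q
  have h3 := (Finset.sum_eq_zero_iff_of_nonneg (fun a _ => Finset.sum_nonneg
    (fun b _ => Complex.normSq_nonneg (Y b a)))).mp hY q (Finset.mem_univ q)
  have h4 := (Finset.sum_eq_zero_iff_of_nonneg (fun b _ => Complex.normSq_nonneg (Y b q))).mp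
    h3 p (Finset.mem_univ p)
  simpa using Complex.normSq_eq_zero.mp h4

-- trace pairing with kron
lemma trace_conjT_kron (Z : Matrix (Fin d × Fin n) (Fin d × Fin n) ℂ)
    (C : Matrix (Fin n) (Fin n) ℂ) :
    (Zᴴ * ((1 : Matrix (Fin d) (Fin d) ℂ) ⊗ₖ C)).trace
      = ((ptr d n Z)ᴴ * C).trace := by
  rw [Matrix.trace, Matrix.trace]
  simp only [ptr, Matrix.diag, Matrix.mul_apply, Matrix.conjTranspose_apply, Matrix.of_apply,
    Matrix.kroneckerMap_apply, Matrix.one_apply, Fintype.sum_prod_type]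
  simp only [mul_ite, mul_one, mul_zero, ite_mul, zero_mul, map_sum, Finset.sum_mul]
  have step1 : ∀ x : Fin d, ∀ x1 : Fin n,
      (∑ x2 : Fin d, ∑ x3 : Fin n,
        if x2 = x then star (Z (x2, x3) (x, x1)) * (1 * C x3 x1) else 0)
      = ∑ x3 : Fin n, star (Z (x, x3) (x, x1)) * C x3 x1 := by
    intro x x1
    rw [Finset.sum_comm]
    simp [Finset.sum_ite_eq']
  calc (∑ x : Fin d, ∑ x1 : Fin n, ∑ x2 : Fin d, ∑ x3 : Fin n,
        if x2 = x then star (Z (x2, x3) (x, x1)) * (1 * C x3 x1) else 0)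
      = ∑ x : Fin d, ∑ x1 : Fin n, ∑ x3 : Fin n, star (Z (x, x3) (x, x1)) * C x3 x1 := by
        exact Finset.sum_congr rfl fun x _ => Finset.sum_congr rfl fun x1 _ => step1 x x1
    _ = ∑ x1 : Fin n, ∑ x3 : Fin n, ∑ x : Fin d, star (Z (x, x3) (x, x1)) * C x3 x1 := by
        rw [Finset.sum_comm]
        exact Finset.sum_congr rfl fun x1 _ => Finset.sum_comm
    _ = ∑ x1 : Fin n, ∑ x3 : Fin n, (∑ x : Fin d, star (Z (x, x3) (x, x1))) * C x3 x1 := by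
        simp [Finset.sum_mul]
    _ = _ := by simp

lemma trace_unitary_conj (U : Matrix (Fin d × Fin n) (Fin d × Fin n) ℂ)
    (hU : U ∈ Matrix.unitaryGroup (Fin d × Fin n) ℂ)
    (M : Matrix (Fin d × Fin n) (Fin d × Fin n) ℂ) : (U * M * Uᴴ).trace = M.trace := by
  have h1' : Uᴴ * U = 1 := by
    simpa [Matrix.star_eq_conjTranspose] using Matrix.mem_unitaryGroup_iff'.mp hU
  rw [Matrix.trace_mul_cycle, h1', Matrix.one_mul]

lemma trace_mul_conj_right (U M : Matrix (Fin d × Fin n) (Fin d × Fin n) ℂ)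
    (N : Matrix (Fin d × Fin n) (Fin d × Fin n) ℂ) :
    (M * (U * N * Uᴴ)).trace = ((Uᴴ * M * U) * N).trace := by
  calc (M * (U * N * Uᴴ)).trace
      = ((M * (U * N)) * Uᴴ).trace := by rw [← Matrix.mul_assoc, ← Matrix.mul_assoc]
    _ = (Uᴴ * (M * (U * N))).trace := Matrix.trace_mul_comm _ _
    _ = ((Uᴴ * M * U) * N).trace := by rw [← Matrix.mul_assoc, ← Matrix.mul_assoc]

lemma phi_adjoint_trace (hd : d ≠ 0) (U : Matrix (Fin d × Fin n) (Fin d × Fin n) ℂ)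
    (hU : U ∈ Matrix.unitaryGroup (Fin d × Fin n) ℂ)
    (X : Matrix (Fin d × Fin n) (Fin d × Fin n) ℂ) (C : Matrix (Fin n) (Fin n) ℂ) :
    ((phi d n U X)ᴴ * factorEmbed d n U C).trace = (Xᴴ * factorEmbed d n U C).trace := by
  have h1' : Uᴴ * U = 1 := by
    simpa [Matrix.star_eq_conjTranspose] using Matrix.mem_unitaryGroup_iff'.mp hU
  set W : Matrix (Fin n) (Fin n) ℂ := (d : ℂ)⁻¹ • ptr d n (Uᴴ * X * U) with hW
  -- right hand side
  have hRHS : (Xᴴ * factorEmbed d n U C).trace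
      = ((Uᴴ * X * U)ᴴ * ((1 : Matrix (Fin d) (Fin d) ℂ) ⊗ₖ C)).trace := by
    rw [factorEmbed_apply, trace_mul_conj_right]
    congr 2
    rw [Matrix.conjTranspose_mul, Matrix.conjTranspose_mul, Matrix.conjTranspose_conjTranspose,
      ← Matrix.mul_assoc]
  -- left hand side
  have hmid : Uᴴ * (phi d n U X)ᴴ * U = ((1 : Matrix (Fin d) (Fin d) ℂ) ⊗ₖ W)ᴴ := by
    have e1 : (phi d n U X)ᴴ
        = U * ((1 : Matrix (Fin d) (Fin d) ℂ) ⊗ₖ W)ᴴ * Uᴴ := by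
      rw [phi_apply, factorEmbed_apply, Matrix.conjTranspose_mul, Matrix.conjTranspose_mul,
        Matrix.conjTranspose_conjTranspose, ← Matrix.mul_assoc]
    rw [e1]
    calc Uᴴ * (U * ((1 : Matrix (Fin d) (Fin d) ℂ) ⊗ₖ W)ᴴ * Uᴴ) * U
        = (Uᴴ * U) * ((1 : Matrix (Fin d) (Fin d) ℂ) ⊗ₖ W)ᴴ * (Uᴴ * U) := by
          rw [Matrix.mul_assoc, Matrix.mul_assoc, Matrix.mul_assoc, ← Matrix.mul_assoc Uᴴ U,
            Matrix.mul_assoc (Uᴴ * U)]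
      _ = _ := by rw [h1', Matrix.one_mul, Matrix.mul_one]
  have hLHS : ((phi d n U X)ᴴ * factorEmbed d n U C).trace
      = (((1 : Matrix (Fin d) (Fin d) ℂ) ⊗ₖ W)ᴴ * ((1 : Matrix (Fin d) (Fin d) ℂ) ⊗ₖ C)).trace := by
    rw [factorEmbed_apply, trace_mul_conj_right, hmid]
  rw [hLHS, hRHS, trace_conjT_kron (Uᴴ * X * U) C]
  rw [kron_one_conjT, Matrix.conjTranspose_one, ← Matrix.mul_kronecker_mul, Matrix.one_mul,
    Matrix.trace_kronecker, Matrix.trace_one, Fintype.card_fin, hW, Matrix.conjTranspose_smul,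
    Matrix.smul_mul, Matrix.trace_smul, smul_eq_mul, ← mul_assoc]
  rw [show (star ((d:ℂ)⁻¹)) = (d:ℂ)⁻¹ by simp [Complex.star_def, map_inv₀]]
  rw [mul_inv_cancel₀ (by exact_mod_cast hd : (d:ℂ) ≠ 0), one_mul]


lemma conj_outer {ι : Type*} [Fintype ι] (V : Matrix ι ι ℂ) (h : ι → ℂ) :
    V * (Matrix.of fun p q => h p * star (h q)) * Vᴴ
      = Matrix.of fun p q => (V *ᵥ h) p * star ((V *ᵥ h) q) := by
  ext p q
  simp only [Matrix.mul_apply, Matrix.of_apply, Matrix.conjTranspose_apply, Matrix.mulVec,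
    dotProduct, star_sum, star_mul', Finset.sum_mul, Finset.mul_sum]
  congr 1; ext s
  congr 1; ext r
  ring

lemma pair_conj {ι : Type*} [Fintype ι] [DecidableEq ι] (U : Matrix ι ι ℂ)
    (M : Matrix ι ι ℂ) (h : ι → ℂ) :
    dotProduct (star h) ((U * M * Uᴴ) *ᵥ h)
      = dotProduct (star (Uᴴ *ᵥ h)) (M *ᵥ (Uᴴ *ᵥ h)) := by
  rw [Matrix.star_mulVec, Matrix.conjTranspose_conjTranspose, Matrix.mulVec_mulVec]
  rw [Matrix.mul_assoc, ← Matrix.mulVec_mulVec, Matrix.dotProduct_mulVec]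

lemma core_sum (g : Fin d × Fin n → ℂ) (T : Matrix (Fin n) (Fin n) ℂ)
    (hT : ∀ a b, T a b = ∑ x : Fin d, g (x,a) * star (g (x,b))) :
    dotProduct (star g) (((1 : Matrix (Fin d) (Fin d) ℂ) ⊗ₖ T) *ᵥ g)
      = ↑(∑ a : Fin n, ∑ b : Fin n, Complex.normSq (T a b)) := by
  have hrhs : ∀ a b : Fin n, (↑(Complex.normSq (T a b)) : ℂ)
      = ∑ x : Fin d, (star (g (x,a)) * g (x,b)) * T a b := by
    intro a b
    rw [Complex.normSq_eq_conj_mul_self]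
    rw [show (starRingEnd ℂ) (T a b) = ∑ x : Fin d, star (g (x,a)) * g (x,b) by
      rw [hT, map_sum]
      exact Finset.sum_congr rfl fun x _ => by simp [star_mul']]
    rw [Finset.sum_mul]
  rw [show ((↑(∑ a : Fin n, ∑ b : Fin n, Complex.normSq (T a b)) : ℂ))
      = ∑ a : Fin n, ∑ b : Fin n, (↑(Complex.normSq (T a b)) : ℂ) by push_cast; rfl]
  rw [Finset.sum_congr rfl fun a _ => Finset.sum_congr rfl fun b _ => hrhs a b]
  simp only [dotProduct, Matrix.mulVec, Matrix.kroneckerMap_apply, Matrix.one_apply,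
    Fintype.sum_prod_type, Pi.star_apply, ite_mul, one_mul, zero_mul, mul_ite, mul_zero]
  have hx : ∀ (x : Fin d) (a : Fin n),
      (∑ x2 : Fin d, ∑ b : Fin n, if x = x2 then T a b * g (x2, b) else 0)
      = ∑ b : Fin n, T a b * g (x, b) := by
    intro x a
    rw [Finset.sum_comm]
    simp
  simp only [hx, Finset.mul_sum]
  rw [Finset.sum_comm]
  refine Finset.sum_congr rfl fun a _ => ?_
  rw [Finset.sum_comm]
  exact Finset.sum_congr rfl fun b _ => Finset.sum_congr rfl fun x _ => by ring

lemma sumSq_le_one (g : Fin d × Fin n → ℂ) (hg : ∑ p, Complex.normSq (g p) = 1)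
    (T : Matrix (Fin n) (Fin n) ℂ)
    (hT : ∀ a b, T a b = ∑ x : Fin d, g (x,a) * star (g (x,b))) :
    ∑ a : Fin n, ∑ b : Fin n, Complex.normSq (T a b) ≤ 1 := by
  set r : Fin n → ℝ := fun a => ∑ x : Fin d, Complex.normSq (g (x,a)) with hr
  have hrs : ∑ a, r a = 1 := by
    rw [← hg, Fintype.sum_prod_type]
    exact Finset.sum_comm
  have hbd : ∀ a b, Complex.normSq (T a b) ≤ r a * r b := by
    intro a b
    have h1 : ‖T a b‖
        ≤ ∑ x : Fin d, ‖g (x,a)‖ * ‖g (x,b)‖ := by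
      rw [hT]
      refine le_trans (norm_sum_le _ _) (le_of_eq ?_)
      exact Finset.sum_congr rfl fun x _ => by simp [_root_.map_mul]
    have h2 : (∑ x : Fin d, ‖g (x,a)‖ * ‖g (x,b)‖)^2
        ≤ r a * r b := by
      refine le_trans (Finset.sum_mul_sq_le_sq_mul_sq _ _ _) (le_of_eq ?_)
      rw [hr]
      congr 1 <;> exact Finset.sum_congr rfl fun x _ => Complex.sq_norm _
    calc Complex.normSq (T a b) = (‖T a b‖)^2 := (Complex.sq_norm _).symm
      _ ≤ (∑ x : Fin d, ‖g (x,a)‖ * ‖g (x,b)‖)^2 :=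
          pow_le_pow_left₀ (norm_nonneg _) h1 2
      _ ≤ r a * r b := h2
  calc ∑ a : Fin n, ∑ b : Fin n, Complex.normSq (T a b)
      ≤ ∑ a : Fin n, ∑ b : Fin n, r a * r b :=
        Finset.sum_le_sum fun a _ => Finset.sum_le_sum fun b _ => hbd a b
    _ = (∑ a, r a) * (∑ b, r b) := (Finset.sum_mul_sum _ _ _ _).symm
    _ = 1 := by rw [hrs]; ring

noncomputable def pairLM (h : Fin d × Fin n → ℂ) :
    Matrix (Fin d × Fin n) (Fin d × Fin n) ℂ →ₗ[ℂ] ℂ where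
  toFun M := dotProduct (star h) (M *ᵥ h)
  map_add' M N := by simp [Matrix.add_mulVec, dotProduct_add]
  map_smul' c M := by simp [Matrix.smul_mulVec, dotProduct_smul]

lemma pairLM_apply (h : Fin d × Fin n → ℂ) (M : Matrix (Fin d × Fin n) (Fin d × Fin n) ℂ) :
    pairLM h M = dotProduct (star h) (M *ᵥ h) := rfl

lemma pairLM_one (h : Fin d × Fin n → ℂ) (hone : dotProduct (star h) h = 1) :
    pairLM h 1 = 1 := by
  rw [pairLM_apply, Matrix.one_mulVec, hone]

lemma phi_pairing_bound (hd : d ≠ 0)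
    (U : Matrix (Fin d × Fin n) (Fin d × Fin n) ℂ)
    (hU : U ∈ Matrix.unitaryGroup (Fin d × Fin n) ℂ)
    (h : Fin d × Fin n → ℂ) (hone : dotProduct (star h) h = 1) :
    ∃ r : ℝ, pairLM h (phi d n U (Matrix.of fun p q => h p * star (h q))) = (r : ℂ)
      ∧ 0 ≤ r ∧ r ≤ (d : ℝ)⁻¹ := by
  have h1 : U * Uᴴ = 1 := by
    simpa [Matrix.star_eq_conjTranspose] using Matrix.mem_unitaryGroup_iff.mp hU
  set P : Matrix (Fin d × Fin n) (Fin d × Fin n) ℂ :=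
    Matrix.of fun p q => h p * star (h q) with hPdef
  set g : Fin d × Fin n → ℂ := Uᴴ *ᵥ h with hg
  have hZ : Uᴴ * P * U = Matrix.of fun p q => g p * star (g q) := by
    have := conj_outer Uᴴ h
    rwa [Matrix.conjTranspose_conjTranspose] at this
  set T : Matrix (Fin n) (Fin n) ℂ := ptr d n (Uᴴ * P * U) with hTdef
  have hT : ∀ a b, T a b = ∑ x : Fin d, g (x,a) * star (g (x,b)) := by
    intro a b
    rw [hTdef, hZ]
    simp [ptr_apply]
  have hpair : pairLM h (phi d n U P)
      = (d : ℂ)⁻¹ * dotProduct (star g)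
          (((1 : Matrix (Fin d) (Fin d) ℂ) ⊗ₖ T) *ᵥ g) := by
    rw [pairLM_apply, phi_apply, factorEmbed_apply, ← hTdef, Matrix.kronecker_smul,
      Matrix.mul_smul, Matrix.smul_mul, Matrix.smul_mulVec, dotProduct_smul,
      smul_eq_mul, pair_conj]
  have hgnorm : ∑ p, Complex.normSq (g p) = 1 := by
    have hpc := pair_conj U 1 h
    rw [Matrix.mul_one, h1, Matrix.one_mulVec, Matrix.one_mulVec, hone] at hpc
    have h2 : dotProduct (star g) g
        = ↑(∑ p, Complex.normSq (g p)) := by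
      push_cast
      simp only [dotProduct, Pi.star_apply]
      exact Finset.sum_congr rfl fun p _ => (Complex.normSq_eq_conj_mul_self).symm
    rw [← hg] at hpc
    rw [h2] at hpc
    exact_mod_cast hpc.symm
  refine ⟨(d:ℝ)⁻¹ * ∑ a : Fin n, ∑ b : Fin n, Complex.normSq (T a b), ?_, ?_, ?_⟩
  · rw [hpair, core_sum g T hT]
    push_cast
    ring
  · exact mul_nonneg (by positivity)
      (Finset.sum_nonneg fun a _ => Finset.sum_nonneg fun b _ => Complex.normSq_nonneg _)
  · have hcs := sumSq_le_one g hgnorm T hT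
    calc (d:ℝ)⁻¹ * ∑ a : Fin n, ∑ b : Fin n, Complex.normSq (T a b)
        ≤ (d:ℝ)⁻¹ * 1 := by
          exact mul_le_mul_of_nonneg_left hcs (by positivity)
      _ = (d:ℝ)⁻¹ := mul_one _

end Stmt9

open Stmt9 in
theorem stmt_9 (d n k : ℕ)
    (U : Fin k → Matrix (Fin d × Fin n) (Fin d × Fin n) ℂ)
    (hU : ∀ i, U i ∈ Matrix.unitaryGroup (Fin d × Fin n) ℂ)
    (hcompl : ∀ i j, i ≠ j →
      ∀ X ∈ LinearMap.range (factorEmbed d n (U i)),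
      ∀ Y ∈ LinearMap.range (factorEmbed d n (U j)),
        X.trace = 0 → Y.trace = 0 → (Xᴴ * Y).trace = 0)
    (h : Fin d × Fin n → ℂ)
    (hunit : ∑ p, ‖h p‖ ^ 2 = 1)
    (hspan : (Matrix.of fun p q => h p * star (h q)) ∈
      ⨆ i, LinearMap.range (factorEmbed d n (U i))) :
    (d : ℝ) + ((d : ℝ) - 1) / ((n : ℝ) - 1) ≤ (k : ℝ) := by
  classical
  by_cases hd0 : d = 0
  · subst hd0; exact absurd hunit (by simp)
  by_cases hn0 : n = 0
  · subst hn0; exact absurd hunit (by simp)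
  set P : Matrix (Fin d × Fin n) (Fin d × Fin n) ℂ :=
    Matrix.of fun p q => h p * star (h q) with hPdef
  have hone : dotProduct (star h) h = 1 := by
    have e1 : dotProduct (star h) h = ↑(∑ p, ‖h p‖ ^ 2) := by
      push_cast
      simp only [dotProduct, Pi.star_apply]
      refine Finset.sum_congr rfl fun p _ => ?_
      rw [← Complex.ofReal_pow, Complex.sq_norm, Complex.normSq_eq_conj_mul_self]
      rfl
    rw [e1, hunit]
    norm_num
  have htraceP : P.trace = 1 := by
    rw [Matrix.trace, ← hone]
    simp only [Matrix.diag, hPdef, Matrix.of_apply, dotProduct, Pi.star_apply]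
    exact Finset.sum_congr rfl fun p _ => by ring
  rcases Nat.eq_zero_or_pos k with hk0 | hkpos
  · exfalso
    subst hk0
    have : P = 0 := by
      have hbot : (⨆ i : Fin 0, LinearMap.range (factorEmbed d n (U i))) = ⊥ := by
        exact iSup_of_empty _
      rw [hbot, Submodule.mem_bot] at hspan
      exact hspan
    rw [this] at htraceP
    simp at htraceP
  -- decomposition
  obtain ⟨f, hfmem, hfsum⟩ := (Submodule.mem_iSup_iff_exists_finsupp _ _).mp hspan
  have hsumA : ∑ i : Fin k, f i = P := by
    rw [← hfsum]
    exact (Finsupp.sum_fintype f (fun _i xi => xi) (fun i => rfl)).symm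
  set s : Fin k → ℂ := fun i => (f i).trace with hs
  have hsum_s : ∑ i, s i = 1 := by
    rw [← htraceP, ← hsumA, Matrix.trace_sum]
  have hdnne : ((d : ℂ) * n) ≠ 0 := by
    simp [hd0, hn0]
  -- key annihilation
  have hkey : ∀ j i, i ≠ j → phi d n (U j) (f i) = (s i / ((d : ℂ) * n)) • 1 := by
    intro j i hij
    set c : ℂ := s i / ((d : ℂ) * n) with hc
    set A0 : Matrix (Fin d × Fin n) (Fin d × Fin n) ℂ := f i - c • 1 with hA0
    have hA0mem : A0 ∈ LinearMap.range (factorEmbed d n (U i)) := by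
      refine Submodule.sub_mem _ (hfmem i) (Submodule.smul_mem _ _ ?_)
      exact ⟨1, factorEmbed_one (U i) (hU i)⟩
    have hA0tr : A0.trace = 0 := by
      rw [hA0, Matrix.trace_sub, Matrix.trace_smul, Matrix.trace_one, hc]
      rw [Fintype.card_prod, Fintype.card_fin, Fintype.card_fin]
      rw [smul_eq_mul]
      push_cast
      field_simp
      exact sub_self _
    set Y : Matrix (Fin d × Fin n) (Fin d × Fin n) ℂ := phi d n (U j) A0 with hY
    have hYmem : Y ∈ LinearMap.range (factorEmbed d n (U j)) := phi_mem _ _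
    have hYtr : Y.trace = 0 := by
      rw [hY, trace_phi hd0 (U j) (hU j), hA0tr]
    have horth := hcompl i j hij A0 hA0mem Y hYmem hA0tr hYtr
    have hYY : (Yᴴ * Y).trace = 0 := by
      have hadj := phi_adjoint_trace hd0 (U j) (hU j) A0
        ((d : ℂ)⁻¹ • ptr d n ((U j)ᴴ * A0 * (U j)))
      have hfe : factorEmbed d n (U j) ((d : ℂ)⁻¹ • ptr d n ((U j)ᴴ * A0 * (U j))) = Y :=
        (phi_apply _ _).symm
      rw [hfe] at hadj
      rw [hadj]
      exact horth
    have hY0 : Y = 0 := zero_of_traceSq Y hYY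
    have hsplit : f i = A0 + c • 1 := by rw [hA0]; abel
    rw [hsplit, map_add, _root_.map_smul, ← hY, hY0, phi_one hd0 (U j) (hU j), zero_add]
  -- phi of P
  have hphiP : ∀ j, phi d n (U j) P
      = f j + ((∑ i ∈ Finset.univ.erase j, s i) / ((d : ℂ) * n)) • 1 := by
    intro j
    conv_lhs => rw [← hsumA, map_sum]
    rw [← Finset.add_sum_erase _ _ (Finset.mem_univ j)]
    congr 1
    · obtain ⟨B, hB⟩ := hfmem j
      rw [← hB, phi_factorEmbed hd0 (U j) (hU j), hB]
    · rw [Finset.sum_div, Finset.sum_smul]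
      exact Finset.sum_congr rfl fun i hi => hkey j i (Finset.ne_of_mem_erase hi)
  -- pairing equality
  have hPh : P *ᵥ h = h := by
    ext p
    simp only [hPdef, Matrix.mulVec, dotProduct, Matrix.of_apply]
    calc ∑ q, h p * star (h q) * h q = h p * ∑ q, star (h q) * h q := by
          rw [Finset.mul_sum]; exact Finset.sum_congr rfl fun q _ => by ring
      _ = h p := by rw [show ∑ q, star (h q) * h q = 1 from hone, mul_one]
  have hpairP : pairLM h P = 1 := by
    rw [pairLM_apply, hPh]; exact hone
  have hsum_pair : ∑ j, pairLM h (phi d n (U j) P)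
      = 1 + ((k : ℂ) - 1) / ((d : ℂ) * n) := by
    have step : ∀ j, pairLM h (phi d n (U j) P)
        = pairLM h (f j) + (∑ i ∈ Finset.univ.erase j, s i) / ((d : ℂ) * n) := by
      intro j
      rw [hphiP j, map_add, _root_.map_smul, pairLM_one h hone, smul_eq_mul, mul_one]
    rw [Finset.sum_congr rfl fun j _ => step j, Finset.sum_add_distrib]
    have t1 : ∑ j, pairLM h (f j) = 1 := by
      rw [← map_sum, hsumA, hpairP]
    have t2 : ∀ j : Fin k, (∑ i ∈ Finset.univ.erase j, s i) = 1 - s j := by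
      intro j
      rw [Finset.sum_erase_eq_sub (Finset.mem_univ j), hsum_s]
    rw [t1]
    congr 1
    rw [Finset.sum_congr rfl fun j _ => by rw [t2 j]]
    rw [← Finset.sum_div, Finset.sum_sub_distrib, hsum_s, Finset.sum_const,
      Finset.card_univ, Fintype.card_fin, nsmul_eq_mul, mul_one]
  -- bounds
  choose r hr hr0 hrle using fun j => phi_pairing_bound hd0 (U j) (hU j) h hone
  have hreal : ∑ j, r j = 1 + ((k : ℝ) - 1) / ((d : ℝ) * n) := by
    have hcx : ((∑ j, r j : ℝ) : ℂ) = 1 + ((k : ℂ) - 1) / ((d : ℂ) * n) := by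
      push_cast
      rw [← hsum_pair]
      exact Finset.sum_congr rfl fun j _ => (hr j).symm
    have : ((∑ j, r j : ℝ) : ℂ) = ((1 + ((k : ℝ) - 1) / ((d : ℝ) * n) : ℝ) : ℂ) := by
      rw [hcx]; push_cast; ring
    exact_mod_cast this
  have hub : ∑ j, r j ≤ (k : ℝ) * (d : ℝ)⁻¹ := by
    calc ∑ j, r j ≤ ∑ _j : Fin k, (d : ℝ)⁻¹ := Finset.sum_le_sum fun j _ => hrle j
      _ = (k : ℝ) * (d : ℝ)⁻¹ := by
          rw [Finset.sum_const, Finset.card_univ, Fintype.card_fin, nsmul_eq_mul]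
  have hdR : (1:ℝ) ≤ d := by exact_mod_cast Nat.one_le_iff_ne_zero.mpr hd0
  have hnR : (1:ℝ) ≤ n := by exact_mod_cast Nat.one_le_iff_ne_zero.mpr hn0
  have hkR : (1:ℝ) ≤ k := by exact_mod_cast hkpos
  have hineq : 1 + ((k : ℝ) - 1) / ((d : ℝ) * n) ≤ (k : ℝ) * (d : ℝ)⁻¹ := by
    rw [← hreal]; exact hub
  have hmain : (d : ℝ) * n + ((k : ℝ) - 1) ≤ (k : ℝ) * n := by
    have hdn0 : (0:ℝ) < (d : ℝ) * n := by nlinarith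
    have h2 := mul_le_mul_of_nonneg_left hineq (le_of_lt hdn0)
    have e1 : (d : ℝ) * n * (1 + ((k : ℝ) - 1) / ((d : ℝ) * n)) = (d : ℝ) * n + ((k:ℝ) - 1) := by
      field_simp
    have e2 : (d : ℝ) * n * ((k : ℝ) * (d : ℝ)⁻¹) = (k : ℝ) * n := by
      field_simp
    rw [e1, e2] at h2
    exact h2
  rcases eq_or_lt_of_le hnR with hn1 | hn2
  · -- n = 1
    have hdle : (d : ℝ) ≤ 1 := by nlinarith
    have hd1 : (d : ℝ) = 1 := le_antisymm hdle hdR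
    rw [hd1]
    simp
    linarith
  · have hpos : (0:ℝ) < (n : ℝ) - 1 := by linarith
    have hdiv : ((d : ℝ) - 1) / ((n : ℝ) - 1) ≤ (k : ℝ) - d := by
      rw [div_le_iff₀ hpos]
      nlinarith
    linarith
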